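/- Assume c ∈ (0,1) and C0 ≥ 1 are constants such that |K_{w'}(i)| ≤ C0·binom(n,w')·(1 − 2w'/n)^i for all integers 0 ≤ w' ≤ c·n and 0 ≤ i ≤ n/2. Let C be a linear binary code of length n whose dual code C⊥ has minimum distance d⊥ < n/2, and set t⊥ = ⌊(d⊥−1)/2⌋. Let w be an integer with 0 ≤ w ≤ c·n and let ε > 0. If ρ is a pmf on F_2^n satisfying d_TV(P_{C⊥} ∗ ρ, U_n) ≤ ε, then (1/binom(n,w))·Σ_{x : |x| = w} 2^n·ρ̂(x) ≤ |C⊥|·V_n(t⊥)/2^{n−1} + C0·n·(1 − 2w/n)^{t⊥} + 2ε. -/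

import Mathlib

open Finset Filter
open scoped Classical BigOperators Topology

abbrev BV (n : ℕ) := Fin n → ZMod 2

def wt {n : ℕ} (x : BV n) : ℕ := (Finset.univ.filter (fun i => x i ≠ 0)).card

def dotp {n : ℕ} (x y : BV n) : ZMod 2 := ∑ i, x i * y i

def IsPMF {α : Type*} [Fintype α] (P : α → ℝ) : Prop :=
  (∀ x, 0 ≤ P x) ∧ ∑ x, P x = 1

noncomputable def dTV {α : Type*} [Fintype α] (P Q : α → ℝ) : ℝ :=
  (1/2) * ∑ x, |P x - Q x|

noncomputable def unif (α : Type*) [Fintype α] : α → ℝ := fun _ => 1 / (Fintype.card α)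

noncomputable def unifOn {α : Type*} [Fintype α] (S : Set α) : α → ℝ :=
  fun x => if x ∈ S then 1 / (Nat.card S) else 0

noncomputable def conv {n : ℕ} (P Q : BV n → ℝ) : BV n → ℝ :=
  fun x => ∑ y, P y * Q (x - y)

noncomputable def FT {n : ℕ} (f : BV n → ℝ) : BV n → ℝ :=
  fun y => (1 / 2^n) * ∑ x, f x * (if dotp x y = 0 then (1:ℝ) else -1)

noncomputable def Kraw (n w i : ℕ) : ℝ :=
  ∑ j ∈ Finset.range (w+1), (-1:ℝ)^j * (Nat.choose i j) * (Nat.choose (n-i) (w-j))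

def Vball (n t : ℕ) : ℕ := ∑ j ∈ Finset.range (t+1), Nat.choose n j

noncomputable def pmfMap {m n : ℕ} (G : Matrix (Fin m) (Fin n) (ZMod 2)) (P : BV n → ℝ) :
    BV m → ℝ :=
  fun u => ∑ z ∈ Finset.univ.filter (fun z => G.mulVec z = u), P z

noncomputable def biasOf {n : ℕ} (e : BV n) (P : BV n → ℝ) : ℝ :=
  1/2 - ∑ z ∈ Finset.univ.filter (fun z => dotp e z = 1), P z

noncomputable def bitPMF {n : ℕ} (e : BV n) (P : BV n → ℝ) : ZMod 2 → ℝ :=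
  fun b => ∑ z ∈ Finset.univ.filter (fun z => dotp e z = b), P z

noncomputable def jointPMF {m n : ℕ} (G : Matrix (Fin m) (Fin n) (ZMod 2)) (e : BV n)
    (P : BV n → ℝ) : BV m × ZMod 2 → ℝ :=
  fun p => ∑ z ∈ Finset.univ.filter (fun z => G.mulVec z = p.1 ∧ dotp e z = p.2), P z

noncomputable def prodPMF {m : ℕ} (Pb : ZMod 2 → ℝ) : BV m × ZMod 2 → ℝ :=
  fun p => (1 / 2^m) * Pb p.2

def dualSet {n : ℕ} (C : Set (BV n)) : Set (BV n) := {y | ∀ c ∈ C, dotp y c = 0}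

def rowSpan {k n : ℕ} (G : Matrix (Fin k) (Fin n) (ZMod 2)) : Submodule (ZMod 2) (BV n) :=
  Submodule.span (ZMod 2) (Set.range (fun i => G i))

noncomputable def Chi (e : ZMod 2) : ℝ := if e = 0 then 1 else -1

lemma zmod2_cases (a : ZMod 2) : a = 0 ∨ a = 1 := by fin_cases a; exacts [Or.inl rfl, Or.inr rfl]

lemma Chi_add (a b : ZMod 2) : Chi (a+b) = Chi a * Chi b := by
  rcases zmod2_cases a with ha | ha <;> rcases zmod2_cases b with hb | hb <;>
    simp [ha, hb, Chi, show (1+1 : ZMod 2) = 0 from rfl]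

lemma Chi_natCast (k : ℕ) : Chi ((k : ZMod 2)) = (-1:ℝ)^k := by
  induction k with
  | zero => simp [Chi]
  | succ m ih => push_cast; rw [Chi_add, ih]; simp [Chi, pow_succ]

def suppF {n : ℕ} (x : BV n) : Finset (Fin n) := Finset.univ.filter (fun i => x i ≠ 0)

lemma wt_eq_card_suppF {n : ℕ} (x : BV n) : wt x = (suppF x).card := rfl

lemma dotp_comm {n : ℕ} (x y : BV n) : dotp x y = dotp y x := by
  unfold dotp; exact Finset.sum_congr rfl (fun i _ => mul_comm _ _)

lemma dotp_card {n : ℕ} (x z : BV n) :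
    dotp x z = (((suppF x ∩ suppF z).card : ℕ) : ZMod 2) := by
  unfold dotp
  have h : ∀ i : Fin n, x i * z i = if i ∈ suppF x ∩ suppF z then 1 else 0 := by
    intro i
    rcases zmod2_cases (x i) with hx | hx <;> rcases zmod2_cases (z i) with hz | hz <;>
      simp [suppF, hx, hz]
  rw [Finset.sum_congr rfl (fun i _ => h i), Finset.sum_ite_mem, Finset.univ_inter,
    Finset.sum_const, nsmul_eq_mul, mul_one]

noncomputable def indic {n : ℕ} (S : Finset (Fin n)) : BV n := fun i => if i ∈ S then 1 else 0

lemma suppF_indic {n : ℕ} (S : Finset (Fin n)) : suppF (indic S) = S := by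
  ext i; by_cases h : i ∈ S <;> simp [suppF, indic, h]

lemma eq_of_suppF_eq {n : ℕ} {x y : BV n} (h : suppF x = suppF y) : x = y := by
  funext i
  have hx := zmod2_cases (x i); have hy := zmod2_cases (y i)
  have hiff : (i ∈ suppF x) ↔ (i ∈ suppF y) := by rw [h]
  simp only [suppF, Finset.mem_filter, Finset.mem_univ, true_and] at hiff
  rcases hx with hx | hx <;> rcases hy with hy | hy <;>
    simp [hx, hy] at hiff ⊢

lemma shell_sum_eq {n w : ℕ} (f : Finset (Fin n) → ℝ) :
    ∑ x ∈ Finset.univ.filter (fun x : BV n => wt x = w), f (suppF x)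
      = ∑ S ∈ Finset.powersetCard w (Finset.univ : Finset (Fin n)), f S := by
  refine Finset.sum_nbij' (fun x => suppF x) (fun S => indic S) ?_ ?_ ?_ ?_ ?_
  · intro x hx
    simp only [Finset.mem_filter, Finset.mem_univ, true_and] at hx
    simp [Finset.mem_powersetCard, ← wt_eq_card_suppF, hx]
  · intro S hS
    simp only [Finset.mem_powersetCard] at hS
    rw [Finset.mem_filter]
    simp [wt_eq_card_suppF, suppF_indic, hS.2]
  · intro x _; exact eq_of_suppF_eq (by rw [suppF_indic])
  · intro S _; exact suppF_indic S
  · intro x _; rfl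

lemma shell_card {n w : ℕ} :
    (Finset.univ.filter (fun x : BV n => wt x = w)).card = n.choose w := by
  have := shell_sum_eq (n := n) (w := w) (fun _ => (1:ℝ))
  simp only [Finset.sum_const, nsmul_eq_mul, mul_one] at this
  have h2 : ((Finset.powersetCard w (Finset.univ : Finset (Fin n))).card : ℝ)
      = n.choose w := by
    rw [Finset.card_powersetCard]; simp
  exact_mod_cast this.trans h2

lemma count_inter {n : ℕ} (Z : Finset (Fin n)) (w j : ℕ) (hj : j ≤ w) :
    ((Finset.powersetCard w (Finset.univ : Finset (Fin n))).filter
        (fun S => (S ∩ Z).card = j)).card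
      = Z.card.choose j * (n - Z.card).choose (w - j) := by
  have h : ((Finset.powersetCard w (Finset.univ : Finset (Fin n))).filter
        (fun S => (S ∩ Z).card = j)).card
      = (Finset.powersetCard j Z ×ˢ Finset.powersetCard (w - j) Zᶜ).card := by
    refine Finset.card_nbij' (fun S => (S ∩ Z, S \ Z)) (fun p => p.1 ∪ p.2) ?_ ?_ ?_ ?_
    · intro S hS
      rw [Finset.mem_coe] at hS
      simp only [Finset.mem_filter, Finset.mem_powersetCard] at hS
      obtain ⟨⟨_, hcard⟩, hint⟩ := hS
      simp only [Finset.mem_coe, Finset.mem_product, Finset.mem_powersetCard]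
      refine ⟨⟨Finset.inter_subset_right, hint⟩, fun i hi => ?_, ?_⟩
      · simp only [Finset.mem_sdiff] at hi; simp [Finset.mem_compl, hi.2]
      · have := Finset.card_inter_add_card_sdiff S Z
        omega
    · intro p hp
      simp only [Finset.mem_coe, Finset.mem_product, Finset.mem_powersetCard] at hp
      obtain ⟨⟨h1, h1c⟩, h2, h2c⟩ := hp
      have hdisj : Disjoint p.1 p.2 := by
        apply Finset.disjoint_left.2
        intro a ha1 ha2
        exact (Finset.mem_compl.1 (h2 ha2)) (h1 ha1)
      have hint : (p.1 ∪ p.2) ∩ Z = p.1 := by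
        rw [Finset.union_inter_distrib_right, Finset.inter_eq_left.2 h1]
        have : p.2 ∩ Z = ∅ := by
          apply Finset.eq_empty_iff_forall_notMem.2
          intro a ha
          simp only [Finset.mem_inter] at ha
          exact (Finset.mem_compl.1 (h2 ha.1)) ha.2
        rw [this, Finset.union_empty]
      simp only [Finset.mem_coe, Finset.mem_filter, Finset.mem_powersetCard]
      refine ⟨⟨Finset.subset_univ _, ?_⟩, by rw [hint, h1c]⟩
      rw [Finset.card_union_of_disjoint hdisj, h1c, h2c]
      omega
    · intro S hS
      simp only [Finset.mem_coe, Finset.mem_filter, Finset.mem_powersetCard] at hS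
      show S ∩ Z ∪ S \ Z = S
      rw [Finset.union_comm]
      exact Finset.sdiff_union_inter S Z
    · intro p hp
      simp only [Finset.mem_coe, Finset.mem_product, Finset.mem_powersetCard] at hp
      obtain ⟨⟨h1, _⟩, h2, _⟩ := hp
      have hint : (p.1 ∪ p.2) ∩ Z = p.1 := by
        rw [Finset.union_inter_distrib_right, Finset.inter_eq_left.2 h1]
        have h0 : p.2 ∩ Z = ∅ := by
          apply Finset.eq_empty_iff_forall_notMem.2
          intro a ha
          simp only [Finset.mem_inter] at ha
          exact (Finset.mem_compl.1 (h2 ha.1)) ha.2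
        rw [h0, Finset.union_empty]
      have hsd : (p.1 ∪ p.2) \ Z = p.2 := by
        ext a
        simp only [Finset.mem_sdiff, Finset.mem_union]
        constructor
        · rintro ⟨ha | ha, hz⟩
          · exact absurd (h1 ha) hz
          · exact ha
        · intro ha
          exact ⟨Or.inr ha, Finset.mem_compl.1 (h2 ha)⟩
      show ((p.1 ∪ p.2) ∩ Z, (p.1 ∪ p.2) \ Z) = p
      rw [hint, hsd]
  rw [h, Finset.card_product, Finset.card_powersetCard, Finset.card_powersetCard,
    Finset.card_compl, Fintype.card_fin]

lemma kraw_identity {n w : ℕ} (z : BV n) :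
    ∑ x ∈ Finset.univ.filter (fun x : BV n => wt x = w), Chi (dotp x z)
      = Kraw n w (wt z) := by
  have step1 : ∀ x : BV n, Chi (dotp x z) = (-1:ℝ)^((suppF x ∩ suppF z).card) := by
    intro x; rw [dotp_card, Chi_natCast]
  rw [Finset.sum_congr rfl (fun x _ => step1 x)]
  rw [shell_sum_eq (fun S => (-1:ℝ)^((S ∩ suppF z).card))]
  rw [← Finset.sum_fiberwise_of_maps_to (g := fun S : Finset (Fin n) => (S ∩ suppF z).card)
    (t := Finset.range (w+1)) (fun S hS => by
      simp only [Finset.mem_powersetCard] at hS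
      simp only [Finset.mem_range]
      have : (S ∩ suppF z).card ≤ S.card := Finset.card_le_card Finset.inter_subset_left
      omega)]
  unfold Kraw
  apply Finset.sum_congr rfl
  intro j hj
  simp only [Finset.mem_range] at hj
  have hjw : j ≤ w := by omega
  have : ∀ S ∈ (Finset.powersetCard w (Finset.univ : Finset (Fin n))).filter
      (fun S => (S ∩ suppF z).card = j), (-1:ℝ)^((S ∩ suppF z).card) = (-1:ℝ)^j := by
    intro S hS
    simp only [Finset.mem_filter] at hS
    rw [hS.2]
  rw [Finset.sum_congr rfl this, Finset.sum_const, count_inter (suppF z) w j hjw,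
    ← wt_eq_card_suppF]
  push_cast
  ring

lemma kraw_abs_le {n w : ℕ} (i : ℕ) (hi : ∃ z : BV n, wt z = i) :
    |Kraw n w i| ≤ (n.choose w : ℝ) := by
  obtain ⟨z, rfl⟩ := hi
  rw [← kraw_identity]
  calc |∑ x ∈ Finset.univ.filter (fun x : BV n => wt x = w), Chi (dotp x z)|
      ≤ ∑ x ∈ Finset.univ.filter (fun x : BV n => wt x = w), |Chi (dotp x z)| :=
        Finset.abs_sum_le_sum_abs _ _
    _ ≤ ∑ x ∈ Finset.univ.filter (fun x : BV n => wt x = w), 1 := by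
        apply Finset.sum_le_sum
        intro x _
        unfold Chi
        split <;> norm_num
    _ = (n.choose w : ℝ) := by rw [Finset.sum_const, shell_card]; simp

def ones (n : ℕ) : BV n := fun _ => 1

lemma wt_add_ones {n : ℕ} (z : BV n) : wt (z + ones n) = n - wt z := by
  have h : Finset.univ.filter (fun i => (z + ones n) i ≠ 0)
      = (Finset.univ.filter (fun i => z i ≠ 0))ᶜ := by
    ext i
    rw [Finset.mem_filter]
    simp only [Finset.mem_filter, Finset.mem_univ, true_and, Finset.mem_compl,
      Pi.add_apply, ones]
    rcases zmod2_cases (z i) with hz | hz <;>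
      simp [hz, show (1+1 : ZMod 2) = 0 from rfl]
  unfold wt
  rw [h, Finset.card_compl, Fintype.card_fin]

lemma dotp_ones {n : ℕ} (x : BV n) : dotp x (ones n) = ((wt x : ℕ) : ZMod 2) := by
  rw [dotp_card]
  congr 1
  rw [wt_eq_card_suppF]
  congr 1
  have : suppF (ones n) = Finset.univ := by
    ext i; simp [suppF, ones]
  rw [this, Finset.inter_univ]

lemma kraw_sym {n w : ℕ} (z : BV n) :
    Kraw n w (wt z) = (-1:ℝ)^w * Kraw n w (wt (z + ones n)) := by
  rw [← kraw_identity, ← kraw_identity, Finset.mul_sum]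
  apply Finset.sum_congr rfl
  intro x hx
  simp only [Finset.mem_filter, Finset.mem_univ, true_and] at hx
  rw [dotp_comm x (z + ones n)]
  have : dotp (z + ones n) x = dotp z x + dotp (ones n) x := by
    unfold dotp
    rw [← Finset.sum_add_distrib]
    exact Finset.sum_congr rfl (fun i _ => by rw [Pi.add_apply, add_mul])
  rw [this, Chi_add, dotp_comm (ones n) x, dotp_ones, Chi_natCast, hx, dotp_comm]
  have h2 : (-1:ℝ)^w * (-1:ℝ)^w = 1 := by
    rw [← pow_add, ← two_mul, pow_mul]; norm_num
  rw [mul_comm (Chi (dotp z x)) ((-1:ℝ)^w), ← mul_assoc, h2, one_mul]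


-- one-sided TV bound
lemma tv_onesided {α : Type*} [Fintype α] (P Q : α → ℝ) (h : ∑ x, P x = ∑ x, Q x)
    (A : Finset α) : ∑ z ∈ A, (P z - Q z) ≤ dTV P Q := by
  have hsplit : ∑ z ∈ A, (P z - Q z) + ∑ z ∈ Aᶜ, (P z - Q z) = 0 := by
    rw [Finset.sum_add_sum_compl, Finset.sum_sub_distrib, h, sub_self]
  have h1 : ∑ z ∈ A, (P z - Q z) ≤ ∑ z ∈ A, |P z - Q z| :=
    Finset.sum_le_sum (fun z _ => le_abs_self _)
  have h2 : -∑ z ∈ Aᶜ, (P z - Q z) ≤ ∑ z ∈ Aᶜ, |P z - Q z| := by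
    rw [← Finset.sum_neg_distrib]
    exact Finset.sum_le_sum (fun z _ => neg_le_abs _)
  have h3 : ∑ z ∈ A, |P z - Q z| + ∑ z ∈ Aᶜ, |P z - Q z| = ∑ z, |P z - Q z| :=
    Finset.sum_add_sum_compl A _
  unfold dTV
  linarith

-- ball cardinality
lemma ball_card {n t : ℕ} :
    (Finset.univ.filter (fun z : BV n => wt z ≤ t)).card = Vball n t := by
  have h : Finset.univ.filter (fun z : BV n => wt z ≤ t)
      = (Finset.range (t+1)).biUnion (fun j => Finset.univ.filter (fun z : BV n => wt z = j)) := by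
    ext z
    simp only [Finset.mem_filter, Finset.mem_univ, true_and, Finset.mem_biUnion,
      Finset.mem_range]
    constructor
    · intro hz; exact ⟨wt z, by omega, rfl⟩
    · rintro ⟨j, hj, rfl⟩; omega
  rw [h, Finset.card_biUnion]
  · unfold Vball
    exact Finset.sum_congr rfl (fun j _ => shell_card)
  · intro i _ j _ hij
    apply Finset.disjoint_left.2
    intro z hz1 hz2
    simp only [Finset.mem_filter] at hz1 hz2
    exact hij (hz1.2 ▸ hz2.2)

lemma unifOn_pmf {n : ℕ} (D : Set (BV n)) (hD : D.Nonempty) : IsPMF (unifOn D) := by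
  constructor
  · intro x
    unfold unifOn
    split
    · positivity
    · exact le_refl 0
  · unfold unifOn
    have hcard : (Nat.card D : ℝ) = (D.toFinset.card : ℝ) := by
      rw [Nat.card_eq_fintype_card, Set.toFinset_card]
    have hpos : 0 < D.toFinset.card := by
      rw [Finset.card_pos]
      obtain ⟨x, hx⟩ := hD
      exact ⟨x, Set.mem_toFinset.2 hx⟩
    have h1 : (∑ x : BV n, if x ∈ D then 1 / (Nat.card D : ℝ) else 0)
        = ∑ x ∈ Finset.univ.filter (fun x => x ∈ D), 1 / (Nat.card D : ℝ) :=
      (Finset.sum_filter _ _).symm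
    have hfc : (Finset.univ.filter (fun x : BV n => x ∈ D)) = D.toFinset := by
      ext x; simp [Set.mem_toFinset]
    rw [h1, hfc, Finset.sum_const, nsmul_eq_mul, hcard, mul_one_div, div_self]
    exact Nat.cast_ne_zero.2 hpos.ne'

lemma conv_pmf {n : ℕ} (P Q : BV n → ℝ) (hP : IsPMF P) (hQ : IsPMF Q) : IsPMF (conv P Q) := by
  constructor
  · intro x
    apply Finset.sum_nonneg
    intro y _
    exact mul_nonneg (hP.1 y) (hQ.1 _)
  · unfold conv
    rw [Finset.sum_comm]
    have : ∀ y : BV n, ∑ x, P y * Q (x - y) = P y := by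
      intro y
      rw [← Finset.mul_sum]
      have : ∑ x : BV n, Q (x - y) = 1 := by
        rw [← hQ.2]
        exact Fintype.sum_equiv (Equiv.subRight y) _ _ (fun x => rfl)
      rw [this, mul_one]
    rw [Finset.sum_congr rfl (fun y _ => this y), hP.2]

lemma unif_pmf {n : ℕ} : IsPMF (unif (BV n)) := by
  constructor
  · intro x; unfold unif; positivity
  · unfold unif
    rw [Finset.sum_const, nsmul_eq_mul, mul_one_div, Finset.card_univ, div_self]
    exact Nat.cast_ne_zero.2 Fintype.card_ne_zero

lemma card_BV (n : ℕ) : (Fintype.card (BV n)) = 2^n := by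
  simp [Fintype.card_fun]

lemma mass_bound {n : ℕ} (D : Set (BV n)) (hD : D.Nonempty) (ρ : BV n → ℝ) (hρ : IsPMF ρ)
    (ε : ℝ) (ht : dTV (conv (unifOn D) ρ) (unif (BV n)) ≤ ε) (v : BV n) (t : ℕ) :
    ∑ z ∈ Finset.univ.filter (fun z : BV n => wt (z - v) ≤ t), ρ z
      ≤ (Nat.card D : ℝ) * (Vball n t : ℝ) / 2^n + ε := by
  classical
  set P := unifOn D with hP
  have hPpmf := unifOn_pmf D hD
  have hCpmf := conv_pmf P ρ hPpmf hρ
  set Bv := Finset.univ.filter (fun z : BV n => wt (z - v) ≤ t) with hBv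
  set A := Finset.univ.filter (fun z : BV n => ∃ y ∈ D, wt (z - y - v) ≤ t) with hA
  -- Step 1
  have step1 : ∑ z ∈ Bv, ρ z ≤ ∑ z ∈ A, conv P ρ z := by
    have hconv : ∑ z ∈ A, conv P ρ z = ∑ y, P y * ∑ z ∈ A, ρ (z - y) := by
      unfold conv
      rw [Finset.sum_comm]
      exact Finset.sum_congr rfl (fun y _ => by rw [Finset.mul_sum])
    rw [hconv]
    have hinner : ∀ y ∈ D, ∑ z ∈ Bv, ρ z ≤ ∑ z ∈ A, ρ (z - y) := by
      intro y hy
      have himg : ∑ z ∈ Bv, ρ z = ∑ z ∈ Bv.image (fun u => u + y), ρ (z - y) := by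
        rw [Finset.sum_image (fun a _ b _ h => by
          have := congrArg (fun x => x - y) h
          simpa using this)]
        apply Finset.sum_congr rfl
        intro u _
        congr 1
        abel
      rw [himg]
      apply Finset.sum_le_sum_of_subset_of_nonneg
      · intro z hz
        simp only [Finset.mem_image] at hz
        obtain ⟨u, hu, rfl⟩ := hz
        simp only [hBv, Finset.mem_filter, Finset.mem_univ, true_and] at hu
        simp only [hA, Finset.mem_filter, Finset.mem_univ, true_and]
        refine ⟨y, hy, ?_⟩
        have : u + y - y - v = u - v := by abel
        rw [this]
        exact hu
      · intro z _ _; exact hρ.1 _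
    calc ∑ z ∈ Bv, ρ z = (∑ y, P y) * ∑ z ∈ Bv, ρ z := by rw [hPpmf.2, one_mul]
      _ = ∑ y, P y * ∑ z ∈ Bv, ρ z := by rw [Finset.sum_mul]
      _ ≤ ∑ y, P y * ∑ z ∈ A, ρ (z - y) := by
          apply Finset.sum_le_sum
          intro y _
          by_cases hy : y ∈ D
          · exact mul_le_mul_of_nonneg_left (hinner y hy) (hPpmf.1 y)
          · have : P y = 0 := by simp [hP, unifOn, hy]
            rw [this, zero_mul, zero_mul]
  -- Step 2
  have step2 : ∑ z ∈ A, conv P ρ z ≤ (A.card : ℝ) / 2^n + ε := by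
    have h1 : ∑ z ∈ A, (conv P ρ z - unif (BV n) z) ≤ dTV (conv P ρ) (unif (BV n)) :=
      tv_onesided _ _ (by rw [hCpmf.2, unif_pmf.2]) A
    have h2 : ∑ z ∈ A, unif (BV n) z = (A.card : ℝ) / 2^n := by
      unfold unif
      rw [Finset.sum_const, nsmul_eq_mul, card_BV]
      push_cast
      ring
    have h3 : ∑ z ∈ A, (conv P ρ z - unif (BV n) z)
        = ∑ z ∈ A, conv P ρ z - ∑ z ∈ A, unif (BV n) z := Finset.sum_sub_distrib _ _
    linarith
  -- Step 3
  have step3 : (A.card : ℝ) ≤ (Nat.card D : ℝ) * (Vball n t : ℝ) := by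
    have hsub : A ⊆ (D.toFinset ×ˢ (Finset.univ.filter (fun u : BV n => wt u ≤ t))).image
        (fun p => p.1 + p.2 + v) := by
      intro z hz
      simp only [hA, Finset.mem_filter, Finset.mem_univ, true_and] at hz
      obtain ⟨y, hy, hu⟩ := hz
      simp only [Finset.mem_image, Finset.mem_product, Set.mem_toFinset,
        Finset.mem_filter, Finset.mem_univ, true_and]
      refine ⟨(y, z - y - v), ⟨hy, hu⟩, ?_⟩
      show y + (z - y - v) + v = z
      abel
    calc (A.card : ℝ) ≤ (((D.toFinset ×ˢ (Finset.univ.filter (fun u : BV n => wt u ≤ t))).image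
        (fun p => p.1 + p.2 + v)).card : ℝ) := by
          exact_mod_cast Finset.card_le_card hsub
      _ ≤ ((D.toFinset ×ˢ (Finset.univ.filter (fun u : BV n => wt u ≤ t))).card : ℝ) := by
          exact_mod_cast Finset.card_image_le
      _ = (Nat.card D : ℝ) * (Vball n t : ℝ) := by
          rw [Finset.card_product, ball_card]
          push_cast
          congr 2
          rw [Nat.card_eq_fintype_card, Set.toFinset_card]
  have h2n : (0:ℝ) < 2^n := by positivity
  calc ∑ z ∈ Bv, ρ z ≤ ∑ z ∈ A, conv P ρ z := step1
    _ ≤ (A.card : ℝ) / 2^n + ε := step2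
    _ ≤ (Nat.card D : ℝ) * (Vball n t : ℝ) / 2^n + ε := by
        gcongr

lemma wt_le {n : ℕ} (z : BV n) : wt z ≤ n := by
  unfold wt
  calc (Finset.univ.filter (fun i => z i ≠ 0)).card ≤ Finset.univ.card :=
        Finset.card_filter_le _ _
    _ = n := by simp

lemma sub_eq_add_bv {n : ℕ} (a b : BV n) : a - b = a + b := by
  funext i
  have h : ∀ x y : ZMod 2, x - y = x + y := by decide
  exact h (a i) (b i)

theorem dual_fourier_sum_bound (n : ℕ) (c C0 : ℝ)
    (hc : c ∈ Set.Ioo (0 : ℝ) 1) (hC0 : 1 ≤ C0)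
    (hK : ∀ w i : ℕ, (w : ℝ) ≤ c * n → (i : ℝ) ≤ (n : ℝ) / 2 →
      |Kraw n w i| ≤ C0 * (n.choose w : ℝ) * (1 - 2 * w / n) ^ i)
    (C : Submodule (ZMod 2) (BV n)) (dperp : ℕ)
    (hdperp : IsLeast {m : ℕ | ∃ y ∈ dualSet (C : Set (BV n)), y ≠ 0 ∧ wt y = m} dperp)
    (hdn : (dperp : ℝ) < (n : ℝ) / 2)
    (w : ℕ) (hw : (w : ℝ) ≤ c * n) (ε : ℝ) (hε : 0 < ε)
    (ρ : BV n → ℝ) (hρ : IsPMF ρ)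
    (ht : dTV (conv (unifOn (dualSet (C : Set (BV n)))) ρ) (unif (BV n)) ≤ ε) :
    (1 / (n.choose w : ℝ)) * ∑ x ∈ Finset.univ.filter (fun x : BV n => wt x = w), 2 ^ n * FT ρ x
      ≤ (Nat.card (dualSet (C : Set (BV n))) : ℝ) * (Vball n ((dperp - 1) / 2) : ℝ) / 2 ^ (n - 1)
        + C0 * n * (1 - 2 * w / n) ^ ((dperp - 1) / 2) + 2 * ε := by
  classical
  obtain ⟨⟨y0, hy0D, hy0ne, hy0wt⟩, _⟩ := hdperp
  set D := dualSet (C : Set (BV n)) with hDdef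
  have hDne : D.Nonempty := ⟨0, fun c _ => by simp [dotp]⟩
  have hd1 : 1 ≤ dperp := by
    rcases Nat.eq_zero_or_pos dperp with h | h
    · exfalso
      apply hy0ne
      have hsupp : suppF y0 = ∅ := Finset.card_eq_zero.1 (by rw [← wt_eq_card_suppF, hy0wt, h])
      have h0 : suppF (0 : BV n) = ∅ := by ext i; simp [suppF]
      exact eq_of_suppF_eq (hsupp.trans h0.symm)
    · exact h
  have hn2 : (2:ℝ) < n := by
    have h1 : (1:ℝ) ≤ (dperp : ℝ) := by exact_mod_cast hd1
    nlinarith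
  have hn3 : 3 ≤ n := by
    have : 2 < n := by exact_mod_cast hn2
    omega
  set t := (dperp - 1) / 2 with htdef
  have htd : t < dperp := by omega
  have htr : (t:ℝ) < (n:ℝ)/2 := by
    have h1 : (t:ℝ) ≤ (dperp:ℝ) := by exact_mod_cast htd.le
    linarith
  have ht2 : 2 * t < n := by
    have h1 : (2*t:ℝ) < n := by push_cast; linarith
    exact_mod_cast h1
  -- main body
  have hwn : w < n := by
    have h1 : (w:ℝ) < n := lt_of_le_of_lt hw (by nlinarith [hc.2, hc.1])
    exact_mod_cast h1
  have hch : (0:ℝ) < (n.choose w : ℝ) := by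
    exact_mod_cast Nat.choose_pos hwn.le
  have hC0pos : (0:ℝ) < C0 := lt_of_lt_of_le one_pos hC0
  set b : ℝ := 1 - 2 * (w:ℝ) / n with hbdef
  have hnpos : (0:ℝ) < n := by linarith
  have hb1 : b ≤ 1 := by
    have h : 0 ≤ 2 * (w:ℝ) / n := by positivity
    simp only [hbdef]
    linarith
  have hb0 : 0 ≤ b := by
    have h1 : ((1:ℕ):ℝ) ≤ (n:ℝ)/2 := by push_cast; linarith
    have h2 := hK w 1 hw h1
    rw [pow_one, ← hbdef] at h2
    have h3 := abs_nonneg (Kraw n w 1)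
    by_contra hb
    push_neg at hb
    have h4 : C0 * (n.choose w : ℝ) * b < 0 := mul_neg_of_pos_of_neg (mul_pos hC0pos hch) hb
    linarith
  have hbt : ∀ i : ℕ, t ≤ i → b ^ i ≤ b ^ t := fun i hi =>
    pow_le_pow_of_le_one hb0 hb1 hi
  have hbtpos : 0 ≤ b ^ t := pow_nonneg hb0 t
  -- rewrite the Fourier sum
  have hrw : ∑ x ∈ Finset.univ.filter (fun x : BV n => wt x = w), (2:ℝ) ^ n * FT ρ x
      = ∑ z, ρ z * Kraw n w (wt z) := by
    have h1 : ∀ x : BV n, (2:ℝ)^n * FT ρ x = ∑ z, ρ z * Chi (dotp z x) := by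
      intro x
      unfold FT
      rw [← mul_assoc, mul_one_div, div_self (by positivity : (2:ℝ)^n ≠ 0), one_mul]
      exact Finset.sum_congr rfl (fun z _ => by unfold Chi; rfl)
    rw [Finset.sum_congr rfl (fun x _ => h1 x), Finset.sum_comm]
    apply Finset.sum_congr rfl
    intro z _
    rw [← Finset.mul_sum, ← kraw_identity]
    congr 1
    exact Finset.sum_congr rfl (fun x _ => by rw [dotp_comm])
  -- regions
  set A0 := Finset.univ.filter (fun z : BV n => wt z ≤ t) with hA0
  set A1 := Finset.univ.filter (fun z : BV n => t < wt z ∧ wt z < n - t) with hA1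
  set A2 := Finset.univ.filter (fun z : BV n => n - t ≤ wt z) with hA2
  have hd01 : Disjoint A0 A1 := by
    apply Finset.disjoint_left.2
    intro z hz0 hz1
    simp only [hA0, hA1, Finset.mem_filter] at hz0 hz1
    omega
  have hd02 : Disjoint A0 A2 := by
    apply Finset.disjoint_left.2
    intro z hz0 hz2
    simp only [hA0, hA2, Finset.mem_filter] at hz0 hz2
    omega
  have hd12 : Disjoint A1 A2 := by
    apply Finset.disjoint_left.2
    intro z hz1 hz2
    simp only [hA1, hA2, Finset.mem_filter] at hz1 hz2
    omega
  have hcover : (Finset.univ : Finset (BV n)) = (A0 ∪ A1) ∪ A2 := by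
    ext z
    simp only [hA0, hA1, hA2, Finset.mem_union, Finset.mem_filter, Finset.mem_univ, true_and,
      true_iff]
    omega
  have hsplit : ∑ z, ρ z * Kraw n w (wt z)
      = ∑ z ∈ A0, ρ z * Kraw n w (wt z) + ∑ z ∈ A1, ρ z * Kraw n w (wt z)
        + ∑ z ∈ A2, ρ z * Kraw n w (wt z) := by
    rw [show (Finset.univ : Finset (BV n)) = (A0 ∪ A1) ∪ A2 from hcover,
      Finset.sum_union (by exact Finset.disjoint_union_left.2 ⟨hd02, hd12⟩),
      Finset.sum_union hd01]
  -- mass bounds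
  set M : ℝ := (Nat.card D : ℝ) * (Vball n t : ℝ) / 2^n with hM
  have hmass0 : ∑ z ∈ A0, ρ z ≤ M + ε := by
    have h := mass_bound D hDne ρ hρ ε ht (0 : BV n) t
    have heq : Finset.univ.filter (fun z : BV n => wt (z - 0) ≤ t) = A0 := by
      apply Finset.filter_congr
      intro z _
      rw [sub_zero]
    rwa [heq] at h
  have hmass2 : ∑ z ∈ A2, ρ z ≤ M + ε := by
    have h := mass_bound D hDne ρ hρ ε ht (ones n) t
    have heq : Finset.univ.filter (fun z : BV n => wt (z - ones n) ≤ t) = A2 := by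
      apply Finset.filter_congr
      intro z _
      rw [sub_eq_add_bv, wt_add_ones]
      have := wt_le z
      omega
    rwa [heq] at h
  -- pointwise bounds
  have habs : ∀ z : BV n, Kraw n w (wt z) ≤ (n.choose w : ℝ) := by
    intro z
    exact le_trans (le_abs_self _) (kraw_abs_le (wt z) ⟨z, rfl⟩)
  have hbound0 : ∑ z ∈ A0, ρ z * Kraw n w (wt z) ≤ (n.choose w : ℝ) * (M + ε) := by
    calc ∑ z ∈ A0, ρ z * Kraw n w (wt z) ≤ ∑ z ∈ A0, ρ z * (n.choose w : ℝ) :=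
          Finset.sum_le_sum (fun z _ => mul_le_mul_of_nonneg_left (habs z) (hρ.1 z))
      _ = (n.choose w : ℝ) * ∑ z ∈ A0, ρ z := by rw [← Finset.sum_mul, mul_comm]
      _ ≤ (n.choose w : ℝ) * (M + ε) := mul_le_mul_of_nonneg_left hmass0 hch.le
  have hbound2 : ∑ z ∈ A2, ρ z * Kraw n w (wt z) ≤ (n.choose w : ℝ) * (M + ε) := by
    calc ∑ z ∈ A2, ρ z * Kraw n w (wt z) ≤ ∑ z ∈ A2, ρ z * (n.choose w : ℝ) :=
          Finset.sum_le_sum (fun z _ => mul_le_mul_of_nonneg_left (habs z) (hρ.1 z))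
      _ = (n.choose w : ℝ) * ∑ z ∈ A2, ρ z := by rw [← Finset.sum_mul, mul_comm]
      _ ≤ (n.choose w : ℝ) * (M + ε) := mul_le_mul_of_nonneg_left hmass2 hch.le
  have hmid : ∀ z ∈ A1, Kraw n w (wt z) ≤ C0 * (n.choose w : ℝ) * b ^ t := by
    intro z hz
    simp only [hA1, Finset.mem_filter, Finset.mem_univ, true_and] at hz
    by_cases hhalf : (wt z : ℝ) ≤ (n:ℝ)/2
    · calc Kraw n w (wt z) ≤ |Kraw n w (wt z)| := le_abs_self _
        _ ≤ C0 * (n.choose w : ℝ) * b ^ (wt z) := hK w (wt z) hw hhalf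
        _ ≤ C0 * (n.choose w : ℝ) * b ^ t := by
            apply mul_le_mul_of_nonneg_left (hbt _ hz.1.le) (by positivity)
    · push_neg at hhalf
      have hsym := kraw_sym (w := w) z
      rw [wt_add_ones] at hsym
      have hnw : ((n - wt z : ℕ) : ℝ) ≤ (n:ℝ)/2 := by
        have hle := wt_le z
        have : ((n - wt z : ℕ) : ℝ) = (n:ℝ) - (wt z : ℝ) := by
          push_cast [Nat.cast_sub hle]
          ring
        rw [this]
        linarith
      have htle : t ≤ n - wt z := by omega
      calc Kraw n w (wt z) = (-1:ℝ)^w * Kraw n w (n - wt z) := hsym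
        _ ≤ |(-1:ℝ)^w * Kraw n w (n - wt z)| := le_abs_self _
        _ = |Kraw n w (n - wt z)| := by
            rw [abs_mul, abs_pow, abs_neg, abs_one, one_pow, one_mul]
        _ ≤ C0 * (n.choose w : ℝ) * b ^ (n - wt z) := hK w (n - wt z) hw hnw
        _ ≤ C0 * (n.choose w : ℝ) * b ^ t := by
            apply mul_le_mul_of_nonneg_left (hbt _ htle) (by positivity)
  have hbound1 : ∑ z ∈ A1, ρ z * Kraw n w (wt z) ≤ (n.choose w : ℝ) * (C0 * b ^ t) := by
    calc ∑ z ∈ A1, ρ z * Kraw n w (wt z)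
        ≤ ∑ z ∈ A1, ρ z * (C0 * (n.choose w : ℝ) * b ^ t) :=
          Finset.sum_le_sum (fun z hz => mul_le_mul_of_nonneg_left (hmid z hz) (hρ.1 z))
      _ = (C0 * (n.choose w : ℝ) * b ^ t) * ∑ z ∈ A1, ρ z := by rw [← Finset.sum_mul, mul_comm]
      _ ≤ (C0 * (n.choose w : ℝ) * b ^ t) * 1 := by
          apply mul_le_mul_of_nonneg_left _ (by positivity)
          rw [← hρ.2]
          exact Finset.sum_le_sum_of_subset_of_nonneg (Finset.subset_univ _)
            (fun z _ _ => hρ.1 z)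
      _ = (n.choose w : ℝ) * (C0 * b ^ t) := by ring
  -- combine
  have htotal : ∑ z, ρ z * Kraw n w (wt z)
      ≤ (n.choose w : ℝ) * (2 * M + 2 * ε + C0 * b ^ t) := by
    rw [hsplit]
    nlinarith [hbound0, hbound1, hbound2]
  have hfin : (1 / (n.choose w : ℝ)) * ∑ z, ρ z * Kraw n w (wt z)
      ≤ 2 * M + 2 * ε + C0 * b ^ t := by
    rw [div_mul_eq_mul_div, one_mul, div_le_iff₀ hch]
    calc ∑ z, ρ z * Kraw n w (wt z) ≤ (n.choose w : ℝ) * (2 * M + 2 * ε + C0 * b ^ t) := htotal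
      _ = (2 * M + 2 * ε + C0 * b ^ t) * (n.choose w : ℝ) := by ring
  rw [hrw]
  have h2M : 2 * M = (Nat.card D : ℝ) * (Vball n t : ℝ) / 2 ^ (n - 1) := by
    rw [hM]
    have hpow : (2:ℝ)^n = 2 * 2^(n-1) := by
      rw [← pow_succ']
      congr 1
      omega
    have hy : ((2:ℝ)^(n-1)) ≠ 0 := by positivity
    rw [hpow]
    rw [show ∀ X Y : ℝ, Y ≠ 0 → 2 * (X/(2*Y)) = X/Y from fun X Y h => by
      field_simp, ]
    exact hy
  have hC0n : C0 * b ^ t ≤ C0 * n * b ^ t := by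
    have h1 : (1:ℝ) ≤ n := by linarith
    have h2 : C0 * 1 ≤ C0 * n := mul_le_mul_of_nonneg_left h1 hC0pos.le
    have h3 := mul_le_mul_of_nonneg_right h2 hbtpos
    rw [mul_one] at h3
    exact h3
  calc (1 / (n.choose w : ℝ)) * ∑ z, ρ z * Kraw n w (wt z)
      ≤ 2 * M + 2 * ε + C0 * b ^ t := hfin
    _ ≤ (Nat.card D : ℝ) * (Vball n t : ℝ) / 2 ^ (n - 1) + C0 * n * b ^ t + 2 * ε := by
        rw [← h2M]; linarith
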